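/- Let L = B₊·W₊·B₊ᵀ − B₋·D·B₋ᵀ be the weighted Laplacian of a signed graph with W₊ and D diagonal having strictly positive entries, and suppose the full graph is connected (the null space of [B₊ B₋]ᵀ equals the span of the all-ones vector) while the negative edges form a cut, i.e. the positive subgraph is not connected (the null space of B₊ᵀ has dimension at least 2). Then the consensus dynamics ẋ = −L·x is unstable: there exists an initial condition x₀ ∈ ℝ^V such that ‖exp(−t·L)·x₀‖ → ∞ as t → ∞, where exp is the matrix exponential. -/

import Mathlib

open Matrix

/-- `B` is an oriented incidence matrix: every column has exactly one `1`,
exactly one `-1`, and zeros elsewhere. -/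
def IsIncidenceMatrix {V E : Type*} (B : Matrix V E ℝ) : Prop :=
  ∀ e : E, ∃ i j : V, i ≠ j ∧ B i e = 1 ∧ B j e = -1 ∧
    ∀ k : V, k ≠ i → k ≠ j → B k e = 0

section ExpAux
attribute [local instance] Matrix.linftyOpNormedAddCommGroup Matrix.linftyOpNormedRing
  Matrix.linftyOpNormedAlgebra

lemma exp_mulVec_eigen {V : Type*} [Fintype V] [DecidableEq V]
    (A : Matrix V V ℝ) (v : V → ℝ) (c : ℝ) (h : A *ᵥ v = c • v) :
    (NormedSpace.exp A) *ᵥ v = Real.exp c • v := by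
  have hpow : ∀ n : ℕ, A ^ n *ᵥ v = c ^ n • v := by
    intro n
    induction n with
    | zero => simp
    | succ n ih =>
      rw [pow_succ', ← Matrix.mulVec_mulVec, ih, Matrix.mulVec_smul, h, smul_smul, ← pow_succ]
  let f : Matrix V V ℝ →ₗ[ℝ] (V → ℝ) :=
    { toFun := fun M => M *ᵥ v
      map_add' := fun M N => Matrix.add_mulVec M N v
      map_smul' := fun a M => Matrix.smul_mulVec a M v }
  let g : Matrix V V ℝ →L[ℝ] (V → ℝ) :=
    { toLinearMap := f, cont := LinearMap.continuous_of_finiteDimensional f }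
  have hsum : Summable fun n : ℕ => (n.factorial : ℝ)⁻¹ • A ^ n :=
    NormedSpace.expSeries_summable' (𝕂 := ℝ) A
  have h1 : (NormedSpace.exp A) *ᵥ v = g (∑' n : ℕ, (n.factorial : ℝ)⁻¹ • A ^ n) := by
    rw [NormedSpace.exp_eq_tsum ℝ]; rfl
  rw [h1, g.map_tsum hsum]
  have h2 : ∀ n : ℕ, g ((n.factorial : ℝ)⁻¹ • A ^ n) = ((n.factorial : ℝ)⁻¹ * c ^ n) • v := by
    intro n
    show ((n.factorial : ℝ)⁻¹ • A ^ n) *ᵥ v = _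
    rw [Matrix.smul_mulVec, hpow, smul_smul]
  simp_rw [h2]
  rw [Summable.tsum_smul_const (by simpa using NormedSpace.expSeries_summable' (𝕂 := ℝ) c),
    Real.exp_eq_exp_ℝ, NormedSpace.exp_eq_tsum ℝ]
  simp [smul_eq_mul]

end ExpAux

/-- if the full signed graph is connected but the negative edges form a
cut (the positive subgraph is not connected), the consensus dynamics `ẋ = −L·x` is
unstable: some solution `t ↦ exp(−t·L)·x₀` blows up. -/
theorem negative_cut_consensus_unstable
    {V Ep Em : Type*} [Fintype V] [Fintype Ep] [Fintype Em]
    [DecidableEq V] [DecidableEq Ep] [DecidableEq Em] [Nonempty V]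
    (Bp : Matrix V Ep ℝ) (Bm : Matrix V Em ℝ)
    (hBp : IsIncidenceMatrix Bp) (hBm : IsIncidenceMatrix Bm)
    (wp : Ep → ℝ) (hwp : ∀ e, 0 < wp e)
    (d : Em → ℝ) (hd : ∀ e, 0 < d e)
    -- the full graph is connected
    (hConn : LinearMap.ker (Matrix.fromCols Bp Bm)ᵀ.mulVecLin =
      Submodule.span ℝ {(fun _ : V => (1 : ℝ))})
    -- the positive subgraph is not connected (the negative edges form a cut)
    (hNotConn : 2 ≤ Module.finrank ℝ (LinearMap.ker Bpᵀ.mulVecLin)) :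
    ∃ x₀ : V → ℝ,
      Filter.Tendsto
        (fun t : ℝ =>
          ‖(NormedSpace.exp
              (-(t • (Bp * Matrix.diagonal wp * Bpᵀ - Bm * Matrix.diagonal d * Bmᵀ)))).mulVec x₀‖)
        Filter.atTop Filter.atTop := by
  set L : Matrix V V ℝ := Bp * Matrix.diagonal wp * Bpᵀ - Bm * Matrix.diagonal d * Bmᵀ with hLdef
  -- Step A: find x in ker Bpᵀ not in span {1}
  have hspan : Module.finrank ℝ (Submodule.span ℝ {(fun _ : V => (1 : ℝ))}) ≤ 1 :=
    finrank_span_le_card _ |>.trans (by simp)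
  have hnotle : ¬ (LinearMap.ker Bpᵀ.mulVecLin ≤ Submodule.span ℝ {(fun _ : V => (1 : ℝ))}) := by
    intro hle
    have := Submodule.finrank_mono hle
    omega
  obtain ⟨x, hxker, hxspan⟩ := SetLike.not_le_iff_exists.mp hnotle
  have hxp : Bpᵀ *ᵥ x = 0 := hxker
  -- Step B: Bmᵀ x ≠ 0
  have hxfull : x ∉ LinearMap.ker (Matrix.fromCols Bp Bm)ᵀ.mulVecLin := by
    rw [hConn]; exact hxspan
  have hym : Bmᵀ *ᵥ x ≠ 0 := by
    intro h0
    apply hxfull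
    show (Matrix.fromCols Bp Bm)ᵀ *ᵥ x = 0
    rw [Matrix.transpose_fromCols, Matrix.fromRows_mulVec, hxp, h0]
    ext (i | i) <;> rfl
  -- Step C: the quadratic form of L at x is negative
  set y : Em → ℝ := Bmᵀ *ᵥ x with hy
  clear hnotle
  obtain ⟨e₀, he₀'⟩ := Function.ne_iff.mp hym
  have he₀ : y e₀ ≠ 0 := by simpa using he₀'
  have hLx : L *ᵥ x = -(Bm *ᵥ (Matrix.diagonal d *ᵥ y)) := by
    rw [hLdef, Matrix.sub_mulVec, Matrix.mul_assoc, ← Matrix.mulVec_mulVec,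
      ← Matrix.mulVec_mulVec, hxp, Matrix.mulVec_zero, Matrix.mulVec_zero,
      Matrix.mul_assoc, ← Matrix.mulVec_mulVec, ← Matrix.mulVec_mulVec, zero_sub]
  have hquad : x ⬝ᵥ (L *ᵥ x) < 0 := by
    rw [hLx, dotProduct_neg, dotProduct_mulVec, ← Matrix.mulVec_transpose]
    have hpos : 0 < (Bmᵀ *ᵥ x) ⬝ᵥ (Matrix.diagonal d *ᵥ y) := by
      rw [dotProduct]
      apply Finset.sum_pos' _ ⟨e₀, Finset.mem_univ e₀, _⟩
      · intro e _
        rw [Matrix.mulVec_diagonal]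
        have : (Bmᵀ *ᵥ x) e = y e := rfl
        rw [this]
        nlinarith [mul_self_nonneg (y e), (hd e).le]
      · rw [Matrix.mulVec_diagonal]
        have : (Bmᵀ *ᵥ x) e₀ = y e₀ := rfl
        rw [this]
        nlinarith [mul_self_pos.mpr he₀, hd e₀]
    linarith
  -- Step D: L is Hermitian
  have hL : L.IsHermitian := by
    rw [Matrix.IsHermitian, Matrix.conjTranspose_eq_transpose_of_trivial, hLdef]
    simp [Matrix.transpose_sub, Matrix.transpose_mul, Matrix.mul_assoc]
  -- Step E: L has a negative eigenvalue
  have hex : ∃ i, hL.eigenvalues i < 0 := by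
    by_contra hcon
    push_neg at hcon
    have hps := (hL.posSemidef_iff_eigenvalues_nonneg.mpr (fun j => hcon j)).dotProduct_mulVec_nonneg x
    rw [show star x = x from funext fun i => star_trivial _] at hps
    linarith
  obtain ⟨i, hμ⟩ := hex
  set μ := hL.eigenvalues i with hμdef
  set v : V → ℝ := ⇑(hL.eigenvectorBasis i) with hv
  have hev : L *ᵥ v = μ • v := hL.mulVec_eigenvectorBasis i
  have hvne : v ≠ 0 := by
    intro h0
    exact hL.eigenvectorBasis.orthonormal.ne_zero i (by ext j; exact congrFun h0 j)
  have hvnorm : 0 < ‖v‖ := norm_pos_iff.mpr hvne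
  refine ⟨v, ?_⟩
  have key : ∀ t : ℝ,
      ‖(NormedSpace.exp (-(t • L))) *ᵥ v‖ = Real.exp (t * -μ) * ‖v‖ := by
    intro t
    have heig : (-(t • L)) *ᵥ v = (t * -μ) • v := by
      rw [Matrix.neg_mulVec, Matrix.smul_mulVec, hev, smul_smul, ← neg_smul]
      ring_nf
    rw [exp_mulVec_eigen _ v _ heig, norm_smul, Real.norm_eq_abs, abs_of_pos (Real.exp_pos _)]
  refine Filter.Tendsto.congr (fun t => (key t).symm) ?_
  apply Filter.Tendsto.atTop_mul_const hvnorm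
  exact Real.tendsto_exp_atTop.comp (Filter.tendsto_id.atTop_mul_const (by linarith : (0:ℝ) < -μ))
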